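/- Fix integers n ≥ 1 and m ≥ 1, and let 𝒮^r_n be the family of strings over the alphabet {a, b₁, ..., b_m} obtained from S_n by independently replacing each occurrence of b with one of the symbols b₁, ..., b_m. Then |𝒮^r_n| = m^{1+⌊log₂ n⌋}, and every S ∈ 𝒮^r_n satisfies δ(S) ≤ m + 1. -/

import Mathlib

/-- The set of distinct length-`k` contiguous substrings of `S`. -/
def substrings {α : Type} [DecidableEq α] (S : List α) (k : ℕ) : Finset (List α) :=
  ((Finset.range (S.length + 1)).image (fun i => (S.drop i).take k)).filter
    (fun t => t.length = k)

/-- `d_k(S)`: the number of distinct length-`k` substrings of `S`. -/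
def subCount {α : Type} [DecidableEq α] (S : List α) (k : ℕ) : ℕ :=
  (substrings S k).card

/-- The measure `δ(S) = max { d_k(S)/k : 1 ≤ k ≤ |S| }` (with value 0 for the empty string). -/
def delta {α : Type} [DecidableEq α] (S : List α) : ℚ :=
  if h : S = [] then 0
  else
    (Finset.Icc 1 S.length).sup'
      (Finset.nonempty_Icc.mpr (Nat.one_le_iff_ne_zero.mpr
        (fun h0 => h (List.length_eq_zero_iff.mp h0))))
      (fun k => (subCount S k : ℚ) / k)

/-- `Sn n`: the length-`n` prefix of the infinite string `S_∞` over `{a, b}`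
(`a = false`, `b = true`) whose `i`-th character (1-based) is `b` iff `i` is a power of 2. -/
def Sn (n : ℕ) : List Bool :=
  (List.range n).map (fun i => (List.range (i + 2)).any (fun j => i + 1 == 2 ^ j))

/-- `𝒮^r_n`: the family of strings over the alphabet `{a, b₁, ..., b_m}`
(encoded over `ℕ`, with `a = 0` and `b_r = r` for `r ∈ [1..m]`) obtained from `S_n`
by independently replacing each occurrence of `b` with one of `b₁, ..., b_m`. -/
def SRfamily (n m : ℕ) : Set (List ℕ) :=
  { S | S.length = n ∧ ∀ i, i < n →
      (if (Sn n).getD i false = true then S.getD i 0 ∈ Finset.Icc 1 m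
       else S.getD i 0 = 0) }

lemma Sn_getD_true_iff (n i : ℕ) (h : i < n) :
    ((Sn n).getD i false = true) ↔ ∃ j, i + 1 = 2 ^ j := by
  unfold Sn
  rw [List.getD_eq_getElem _ _ (by simpa using h)]
  simp only [List.getElem_map, List.getElem_range, List.any_eq_true, List.mem_range, beq_iff_eq]
  constructor
  · rintro ⟨j, _, hj⟩; exact ⟨j, hj⟩
  · rintro ⟨j, hj⟩
    refine ⟨j, ?_, hj⟩
    have : j < 2 ^ j := Nat.lt_two_pow_self
    omega

def Bset (n : ℕ) : Finset ℕ := (Finset.range n).filter (fun i => (Sn n).getD i false)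

lemma Bset_eq (n : ℕ) (hn : 1 ≤ n) :
    Bset n = (Finset.range (Nat.log 2 n + 1)).image (fun j => 2 ^ j - 1) := by
  ext i
  simp only [Bset, Finset.mem_filter, Finset.mem_range, Finset.mem_image]
  constructor
  · rintro ⟨hi, hb⟩
    obtain ⟨j, hj⟩ := (Sn_getD_true_iff n i hi).1 hb
    refine ⟨j, ?_, by omega⟩
    have h2 : 2 ^ j ≤ n := by omega
    have := (Nat.le_log_iff_pow_le (by norm_num) (by omega)).2 h2
    omega
  · rintro ⟨j, hj, rfl⟩
    have h1 : 2 ^ j ≤ n :=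
      le_trans (Nat.pow_le_pow_right (by norm_num) (by omega)) (Nat.pow_log_le_self 2 (by omega))
    have hpos : 1 ≤ 2 ^ j := Nat.one_le_two_pow
    refine ⟨by omega, ?_⟩
    rw [Sn_getD_true_iff n _ (by omega)]
    exact ⟨j, by omega⟩

lemma Bset_card (n : ℕ) (hn : 1 ≤ n) : (Bset n).card = 1 + Nat.log 2 n := by
  rw [Bset_eq n hn, Finset.card_image_of_injective _ ?_, Finset.card_range]
  · omega
  · intro a b hab
    simp only at hab
    have ha : 1 ≤ 2 ^ a := Nat.one_le_two_pow
    have hb : 1 ≤ 2 ^ b := Nat.one_le_two_pow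
    have : (2:ℕ) ^ a = 2 ^ b := by omega
    exact Nat.pow_right_injective (le_refl 2) this

noncomputable def Gset (n m : ℕ) : Finset (Fin n → ℕ) :=
  Fintype.piFinset (fun i : Fin n => if (Sn n).getD i false then Finset.Icc 1 m else {0})

lemma SRfamily_eq (n m : ℕ) :
    SRfamily n m = ↑((Gset n m).image List.ofFn) := by
  ext S
  simp only [SRfamily, Set.mem_setOf_eq, Finset.coe_image, Set.mem_image, Finset.mem_coe,
    Gset, Fintype.mem_piFinset]
  constructor
  · rintro ⟨hlen, hS⟩
    refine ⟨fun i => S.getD i 0, fun i => ?_, ?_⟩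
    · have := hS i (hlen ▸ i.2)
      split_ifs with h
      · rw [if_pos h] at this; exact this
      · rw [if_neg h] at this; simpa using this
    · apply List.ext_getElem (by simp [hlen])
      intro p h1 h2
      simp only [List.getElem_ofFn]
      rw [List.getD_eq_getElem S 0 h2]
  · rintro ⟨g, hg, rfl⟩
    refine ⟨by simp, fun i hi => ?_⟩
    have hgd : (List.ofFn g).getD i 0 = g ⟨i, hi⟩ := by
      rw [List.getD_eq_getElem _ 0 (by simpa using hi)]
      simp
    rw [hgd]
    have := hg ⟨i, hi⟩
    split_ifs with h
    · rw [if_pos h] at this; exact this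
    · rw [if_neg h] at this; simpa using this

lemma Gset_card (n m : ℕ) : (Gset n m).card = m ^ (Bset n).card := by
  rw [Gset, Fintype.card_piFinset]
  have : ∀ i : Fin n,
      (if (Sn n).getD i false then Finset.Icc 1 m else ({0} : Finset ℕ)).card
      = if (Sn n).getD (i : ℕ) false then m else 1 := by
    intro i; split <;> simp
  rw [Finset.prod_congr rfl (fun i _ => this i)]
  rw [Finset.prod_ite, Finset.prod_const, Finset.prod_const, one_pow, mul_one]
  congr 1
  rw [Bset]
  refine Finset.card_bij (fun (i : Fin n) _ => (i : ℕ)) ?_ ?_ ?_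
  · intro i hi
    simp only [Finset.mem_filter, Finset.mem_univ, true_and] at hi ⊢
    exact ⟨Finset.mem_range.2 i.2, hi⟩
  · intro a _ b _ h; exact Fin.val_injective h
  · intro a ha
    simp only [Finset.mem_filter, Finset.mem_range] at ha
    exact ⟨⟨a, ha.1⟩, by simpa using ha.2, rfl⟩

lemma SRfamily_ncard (n m : ℕ) : (SRfamily n m).ncard = m ^ (Bset n).card := by
  rw [SRfamily_eq, Set.ncard_coe_finset,
    Finset.card_image_of_injective _ List.ofFn_injective, Gset_card]

/-- list with at most one nonzero entry is determined by (findIdx, value). -/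
lemma canon_list (t : List ℕ) (h : t.countP (fun x => x != 0) ≤ 1) :
    t = (List.replicate t.length 0).set (t.findIdx (fun x => x != 0))
          (t.getD (t.findIdx (fun x => x != 0)) 0) := by
  set p := t.findIdx (fun x => x != 0) with hp
  apply List.ext_getElem (by simp)
  intro q hq hq'
  rw [List.getElem_set]
  split_ifs with hpq
  · subst hpq
    rw [List.getD_eq_getElem _ _ hq]
  · rw [List.getElem_replicate]
    by_contra hne
    rcases lt_or_gt_of_ne hpq with hlt | hgt
    · have hplen2 : p < t.length := lt_trans hlt hq
      have h1 : (fun x => x != 0) t[p] = true := List.findIdx_getElem (w := hplen2)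
      have hsplit := List.countP_append (p := fun x => x != 0) (l₁ := t.take (p+1)) (l₂ := t.drop (p+1))
      rw [List.take_append_drop] at hsplit
      have c1 : 0 < (t.take (p+1)).countP (fun x => x != 0) := by
        rw [List.countP_pos_iff]
        have hl : p < (t.take (p+1)).length := by simp; omega
        refine ⟨(t.take (p+1))[p], List.getElem_mem hl, ?_⟩
        rw [List.getElem_take]; exact h1
      have c2 : 0 < (t.drop (p+1)).countP (fun x => x != 0) := by
        rw [List.countP_pos_iff]
        have hl : q - (p+1) < (t.drop (p+1)).length := by simp; omega
        refine ⟨(t.drop (p+1))[q - (p+1)], List.getElem_mem hl, ?_⟩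
        rw [List.getElem_drop]
        have he : p + 1 + (q - (p+1)) = q := by omega
        simp only [he]
        simpa using hne
      omega
    · have hf := List.not_of_lt_findIdx (p := fun x => x != 0) (xs := t) (i := q) hgt
      simp only [bne_eq_false_iff_eq] at hf
      exact hne hf

lemma exists_two_nonzero (t : List ℕ) (h : 2 ≤ t.countP (fun x => x != 0)) :
    ∃ a b, a < b ∧ b < t.length ∧ t.getD a 0 ≠ 0 ∧ t.getD b 0 ≠ 0 := by
  have hex : ∃ x ∈ t, (fun x => x != 0) x = true := by
    rw [← List.countP_pos_iff]; omega
  set p := t.findIdx (fun x => x != 0) with hp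
  have hplen : p < t.length := List.findIdx_lt_length_of_exists hex
  have hpnz : (fun x => x != 0) t[p] = true := List.findIdx_getElem (w := hplen)
  have hctot := List.countP_append (p := fun x => x != 0) (l₁ := t.take (p+1)) (l₂ := t.drop (p+1))
  rw [List.take_append_drop] at hctot
  have c1 : (t.take (p+1)).countP (fun x => x != 0) ≤ 1 := by
    rw [List.take_succ, List.countP_append]
    have z : (t.take p).countP (fun x => x != 0) = 0 := by
      rw [List.countP_eq_zero]
      intro x hx
      rw [List.mem_iff_getElem] at hx
      obtain ⟨u, hu, rfl⟩ := hx
      have hu' : u < p := by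
        have := hu; simp only [List.length_take] at this; omega
      have hf := List.not_of_lt_findIdx (p := fun x => x != 0) (xs := t) (i := u) hu'
      rw [List.getElem_take]
      simp only [hf]
      simp
    have hone : (t[p]?.toList).countP (fun x => x != 0) ≤ 1 :=
      calc _ ≤ t[p]?.toList.length := List.countP_le_length
        _ ≤ 1 := by cases h2 : t[p]? <;> simp
    omega
  have c2 : 0 < (t.drop (p+1)).countP (fun x => x != 0) := by omega
  rw [List.countP_pos_iff] at c2
  obtain ⟨x, hx, hxnz⟩ := c2
  rw [List.mem_iff_getElem] at hx
  obtain ⟨r, hr, rfl⟩ := hx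
  have hr0 : r < t.length - (p+1) := by simpa using hr
  have hr' : p + 1 + r < t.length := by omega
  refine ⟨p, p + 1 + r, by omega, hr', ?_, ?_⟩
  · rw [List.getD_eq_getElem _ _ hplen]; simpa using hpnz
  · rw [List.getD_eq_getElem _ _ hr']
    rw [List.getElem_drop] at hxnz
    simpa using hxnz

lemma mem_substrings {α : Type} [DecidableEq α] {S : List α} {k : ℕ} {t : List α} :
    t ∈ substrings S k ↔ ∃ i, i + k ≤ S.length ∧ t = (S.drop i).take k := by
  simp only [substrings, Finset.mem_filter, Finset.mem_image, Finset.mem_range]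
  constructor
  · rintro ⟨⟨i, hi, rfl⟩, hlen⟩
    refine ⟨i, ?_, rfl⟩
    simp only [List.length_take, List.length_drop] at hlen
    omega
  · rintro ⟨i, hik, rfl⟩
    exact ⟨⟨i, by omega, rfl⟩, by simp; omega⟩

lemma length_of_mem_substrings {α : Type} [DecidableEq α] {S : List α} {k : ℕ} {t : List α}
    (h : t ∈ substrings S k) : t.length = k := (Finset.mem_filter.1 h).2

lemma window_getD (S : List ℕ) (i k p : ℕ) (hik : i + k ≤ S.length) (hp : p < k) :
    ((S.drop i).take k).getD p 0 = S.getD (i + p) 0 := by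
  have h1 : p < ((S.drop i).take k).length := by simp; omega
  rw [List.getD_eq_getElem _ _ h1, List.getD_eq_getElem _ _ (by omega : i + p < S.length)]
  rw [List.getElem_take, List.getElem_drop]

lemma subCount_bound (n m k : ℕ) (hk : 1 ≤ k) (S : List ℕ)
    (hS : S ∈ SRfamily n m) : subCount S k ≤ (m + 1) * k := by
  obtain ⟨hlen, hcond⟩ := hS
  have hchar : ∀ i, i < n → S.getD i 0 ≤ m ∧ (S.getD i 0 ≠ 0 ↔ ∃ j, i + 1 = 2 ^ j) := by
    intro i hi
    have h := hcond i hi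
    by_cases hb : (Sn n).getD i false = true
    · rw [if_pos hb] at h
      rw [Finset.mem_Icc] at h
      exact ⟨h.2, fun _ => (Sn_getD_true_iff n i hi).1 hb, fun _ => by omega⟩
    · rw [if_neg hb] at h
      exact ⟨by omega, fun hnz => absurd h hnz,
        fun hj => absurd ((Sn_getD_true_iff n i hi).2 hj) hb⟩
  classical
  set P : List ℕ → Prop := fun t => 2 ≤ t.countP (fun x => x != 0) with hP
  rw [subCount, ← Finset.card_filter_add_card_filter_not (p := P)]
  -- bound on substrings with ≥ 2 nonzero entries
  have hB : ((substrings S k).filter P).card ≤ k - 1 := by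
    have hsub : (substrings S k).filter P ⊆
        (Finset.range (k - 1)).image (fun i => (S.drop i).take k) := by
      intro t ht
      rw [Finset.mem_filter] at ht
      obtain ⟨hts, htP⟩ := ht
      have htk := length_of_mem_substrings hts
      obtain ⟨i, hik, rfl⟩ := mem_substrings.1 hts
      obtain ⟨a, b, hab, hbl, ha0, hb0⟩ := exists_two_nonzero _ htP
      rw [htk] at hbl
      rw [window_getD S i k a hik (by omega)] at ha0
      rw [window_getD S i k b hik (by omega)] at hb0
      obtain ⟨ja, hja⟩ := ((hchar (i + a) (by omega)).2).1 ha0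
      obtain ⟨jb, hjb⟩ := ((hchar (i + b) (by omega)).2).1 hb0
      have hlt : (2:ℕ) ^ ja < 2 ^ jb := by omega
      have hjajb : ja < jb := (Nat.pow_lt_pow_iff_right (by norm_num)).1 hlt
      have hdouble : 2 * 2 ^ ja ≤ 2 ^ jb := by
        calc 2 * 2 ^ ja = 2 ^ (ja + 1) := by ring
          _ ≤ 2 ^ jb := Nat.pow_le_pow_right (by norm_num) (by omega)
      rw [Finset.mem_image]
      exact ⟨i, Finset.mem_range.2 (by omega), rfl⟩
    calc _ ≤ ((Finset.range (k - 1)).image (fun i => (S.drop i).take k)).card :=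
          Finset.card_le_card hsub
      _ ≤ (Finset.range (k-1)).card := Finset.card_image_le
      _ = k - 1 := Finset.card_range _
  -- bound on substrings with ≤ 1 nonzero entry
  have hA : ((substrings S k).filter (fun t => ¬ P t)).card ≤ k * m + 1 := by
    set enc : List ℕ → ℕ × ℕ := fun t =>
      (t.findIdx (fun x => x != 0), t.getD (t.findIdx (fun x => x != 0)) 0) with henc
    have hcard : (((Finset.range k) ×ˢ (Finset.Icc 1 m)) ∪ {(k, 0)} : Finset (ℕ × ℕ)).card
        ≤ k * m + 1 := by
      calc _ ≤ ((Finset.range k) ×ˢ (Finset.Icc 1 m)).card + ({(k,0)} : Finset (ℕ×ℕ)).card :=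
            Finset.card_union_le _ _
        _ = k * m + 1 := by simp [Nat.Icc_eq_range', Finset.card_range]
    refine le_trans (Finset.card_le_card_of_injOn enc ?_ ?_) hcard
    · intro t ht
      rw [Finset.mem_coe, Finset.mem_filter] at ht; rw [Finset.mem_coe]
      obtain ⟨hts, htP⟩ := ht
      have htk := length_of_mem_substrings hts
      obtain ⟨i, hik, htw⟩ := mem_substrings.1 hts
      set p0 := t.findIdx (fun x => x != 0) with hp0
      have hple : p0 ≤ k := htk ▸ List.findIdx_le_length
      rcases eq_or_lt_of_le hple with hpk | hpk
      · have hz : t.getD p0 0 = 0 := List.getD_eq_default _ _ (by omega)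
        rw [Finset.mem_union]
        right
        rw [Finset.mem_singleton]
        show (p0, t.getD p0 0) = (k, 0)
        rw [hpk] at hz ⊢
        rw [hz]
      · rw [Finset.mem_union]
        left
        rw [Finset.mem_product]
        have hplen : p0 < t.length := htk ▸ hpk
        have hnz : (t[p0] != 0) = true := List.findIdx_getElem (w := hplen)
        have hnz' : t.getD p0 0 ≠ 0 := by
          rw [List.getD_eq_getElem _ _ hplen]; simpa using hnz
        have hle : t.getD p0 0 ≤ m := by
          have hw : t.getD p0 0 = S.getD (i + p0) 0 := by
            conv_lhs => rw [htw]
            exact window_getD S i k p0 hik (by omega)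
          rw [hw]
          exact (hchar (i + p0) (by omega)).1
        show p0 ∈ Finset.range k ∧ t.getD p0 0 ∈ Finset.Icc 1 m
        refine ⟨Finset.mem_range.2 hpk, ?_⟩
        rw [Finset.mem_Icc]
        exact ⟨by omega, hle⟩
    · intro t1 ht1 t2 ht2 he
      simp only [Finset.coe_filter, Set.mem_setOf_eq] at ht1 ht2
      have h1 := canon_list t1 (by have := ht1.2; simp only [hP] at this; omega)
      have h2 := canon_list t2 (by have := ht2.2; simp only [hP] at this; omega)
      have hl1 := length_of_mem_substrings ht1.1
      have hl2 := length_of_mem_substrings ht2.1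
      have e1 : (t1.findIdx (fun x => x != 0)) = (t2.findIdx (fun x => x != 0)) :=
        congrArg Prod.fst he
      have e2 : t1.getD (t1.findIdx (fun x => x != 0)) 0
          = t2.getD (t2.findIdx (fun x => x != 0)) 0 := congrArg Prod.snd he
      rw [h1, h2, hl1, hl2, e2, e1]
  have : k * m + 1 + (k - 1) = (m + 1) * k := by
    have : 1 ≤ k := hk
    cases k with
    | zero => omega
    | succ k' => ring_nf; omega
  omega

lemma delta_le_of_mem (n m : ℕ) (hn : 1 ≤ n) (S : List ℕ) (hS : S ∈ SRfamily n m) :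
    delta S ≤ (m : ℚ) + 1 := by
  have hlen : S.length = n := hS.1
  have hne : S ≠ [] := by
    intro h
    rw [h] at hlen
    simp at hlen
    omega
  rw [delta, dif_neg hne]
  apply Finset.sup'_le
  intro k hk
  rw [Finset.mem_Icc] at hk
  have hb := subCount_bound n m k hk.1 S hS
  have hk0 : (0:ℚ) < k := by exact_mod_cast hk.1
  rw [div_le_iff₀ hk0]
  calc (subCount S k : ℚ) ≤ (((m + 1) * k : ℕ) : ℚ) := by exact_mod_cast hb
    _ = ((m:ℚ) + 1) * k := by push_cast; ring

/-- For `n, m ≥ 1`, the family `𝒮^r_n` has exactly `m^(1+⌊log₂ n⌋)` members, and every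
`S ∈ 𝒮^r_n` satisfies `δ(S) ≤ m + 1`. -/
theorem SRfamily_card_and_delta (n m : ℕ) (hn : 1 ≤ n) (hm : 1 ≤ m) :
    (SRfamily n m).ncard = m ^ (1 + Nat.log 2 n) ∧
    ∀ S ∈ SRfamily n m, delta S ≤ (m : ℚ) + 1 := by
  constructor
  · rw [SRfamily_ncard, Bset_card n hn]
  · intro S hS
    exact delta_le_of_mem n m hn S hS
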